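/- Let p ≥ 5 be a prime and let γ ∈ ℨ be the element whose k-th component is the class of p^{2k} modulo p^k(p²−1). Then the ℨ-expansion of γ has coefficients a_0 = 1, a_i = 1 for every odd i ≥ 1, and a_i = 0 for every even i ≥ 2. In particular the coefficient sequence (a_i)_{i≥1} has infinitely many zero entries and infinitely many nonzero entries. -/
import Mathlib

private lemma gammaExp_sum_eq (p : ℕ) (k : ℕ) :
    1 + ((p:ℤ)^2 - 1) * ∑ i ∈ Finset.range k, (if Even i then (p:ℤ)^i else 0)
      = (p:ℤ)^(2*((k+1)/2)) := by
  induction k with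
  | zero => simp
  | succ k ih =>
    rw [Finset.sum_range_succ]
    rcases Nat.even_or_odd k with hk | hk
    · obtain ⟨t, rfl⟩ := hk
      rw [if_pos (by exact ⟨t, rfl⟩)]
      have h1 : (t + t + 1)/2 = t := by omega
      have h2 : (t + t + 1 + 1)/2 = t + 1 := by omega
      rw [h1] at ih
      rw [h2]
      linear_combination ih
    · obtain ⟨t, rfl⟩ := hk
      rw [if_neg (by rw [Nat.even_iff]; omega)]
      have h2 : (2*t + 1 + 1 + 1)/2 = (2*t + 1 + 1)/2 := by omega
      rw [h2, add_zero]
      exact ih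

private lemma gammaExp_key_dvd (p : ℕ) (k : ℕ) :
    ((p:ℤ)^k * ((p:ℤ)^2 - 1)) ∣ (p:ℤ)^(2*k) - (p:ℤ)^(2*((k+1)/2)) := by
  set m := (k+1)/2 with hm
  have hkm : k ≤ 2*m ∧ m ≤ k ∨ k = 0 := by omega
  rcases hkm with ⟨h1, h2⟩ | rfl
  · have : (p:ℤ)^(2*k) - (p:ℤ)^(2*m) = (p:ℤ)^(2*m) * (((p:ℤ)^2)^(k-m) - 1) := by
      rw [mul_sub, mul_one, ← pow_mul, ← pow_add]
      congr 2
      omega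
    rw [this]
    exact mul_dvd_mul (pow_dvd_pow _ h1)
      (by simpa using sub_dvd_pow_sub_pow ((p:ℤ)^2) 1 (k-m))
  · simp [hm]

/-- The ℨ-expansion of `γ = lim_k p^{2k}` has coefficients `a₀ = 1`, `aᵢ = 1` for odd
`i ≥ 1`, and `aᵢ = 0` for even `i ≥ 2`; in particular the coefficient sequence
`(aᵢ)_{i≥1}` has infinitely many zero and infinitely many nonzero entries. -/
theorem gamma_expansion (p : ℕ) [Fact p.Prime] (hp5 : 5 ≤ p)
    (a : ℕ → ℕ) (ha : a = fun i => if i = 0 then 1 else if Odd i then 1 else 0) :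
    (∀ k : ℕ, ((p ^ (2 * k) : ℕ) : ZMod (p ^ k * (p ^ 2 - 1))) =
      ((a 0 + (p ^ 2 - 1) * ∑ i ∈ Finset.range k, a (i + 1) * p ^ i : ℕ) :
        ZMod (p ^ k * (p ^ 2 - 1)))) ∧
    (a 0 = 1) ∧ (∀ i : ℕ, 1 ≤ i → Odd i → a i = 1) ∧
    (∀ i : ℕ, 2 ≤ i → Even i → a i = 0) ∧
    {i : ℕ | 1 ≤ i ∧ a i = 0}.Infinite ∧ {i : ℕ | 1 ≤ i ∧ a i ≠ 0}.Infinite := by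
  subst ha
  have ha0 : (fun i => if i = 0 then 1 else if Odd i then 1 else 0 : ℕ → ℕ) 0 = 1 := rfl
  have hp1 : 1 ≤ p := by omega
  have hsq : 1 ≤ p ^ 2 := Nat.one_le_pow _ _ (by omega)
  refine ⟨?_, rfl, ?_, ?_, ?_, ?_⟩
  · intro k
    rw [ZMod.natCast_eq_natCast_iff]
    rw [Nat.modEq_iff_dvd]
    have hcast : ((p ^ k * (p ^ 2 - 1) : ℕ) : ℤ) = (p:ℤ)^k * ((p:ℤ)^2 - 1) := by
      push_cast [Nat.cast_sub hsq]
      ring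
    rw [hcast]
    have hrhs : (((fun i => if i = 0 then 1 else if Odd i then 1 else 0 : ℕ → ℕ) 0
        + (p ^ 2 - 1) * ∑ i ∈ Finset.range k,
          (fun i => if i = 0 then 1 else if Odd i then 1 else 0 : ℕ → ℕ) (i + 1) * p ^ i : ℕ)
          : ℤ)
        = 1 + ((p:ℤ)^2 - 1) * ∑ i ∈ Finset.range k, (if Even i then (p:ℤ)^i else 0) := by
      push_cast [Nat.cast_sub hsq]
      norm_num
      left
      refine Finset.sum_congr rfl fun i _ => ?_
      simp only [Nat.odd_add_one, Nat.not_odd_iff_even]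
    rw [hrhs, gammaExp_sum_eq]
    push_cast
    exact dvd_sub_comm.mp (gammaExp_key_dvd p k)
  · intro i hi hodd
    simp only [if_neg (by omega : ¬ i = 0), if_pos hodd]
  · intro i hi heven
    have : ¬ Odd i := by simpa [Nat.not_odd_iff_even] using heven
    simp only [if_neg (by omega : ¬ i = 0), if_neg this]
  · apply Set.infinite_of_injective_forall_mem (f := fun n : ℕ => 2 * n + 2)
    · intro a b h; dsimp only at h; omega
    · intro n
      refine ⟨by omega, ?_⟩
      have : ¬ Odd (2 * n + 2) := by rw [Nat.odd_iff]; omega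
      simp [this]
  · apply Set.infinite_of_injective_forall_mem (f := fun n : ℕ => 2 * n + 1)
    · intro a b h; dsimp only at h; omega
    · intro n
      refine ⟨by omega, ?_⟩
      have : Odd (2 * n + 1) := by rw [Nat.odd_iff]; omega
      simp [this]
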